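/- Let S be a commutative semiring with the cancellation property (a ⊙ c = b ⊙ c and c ≠ 0_S imply a = b). If z and z' are eventually-zero d-dimensional time series over S such that ⟨ISS_{0,∞}(z), w⟩ = ⟨ISS_{0,∞}(z'), w⟩ for every word w over the alphabet A, then the compressions of z and z' coincide: ž = ž'. -/

import Mathlib

/-- The monomial `z^{⊙a}` associated to an exponent vector `a ∈ ℕ^d` and `z ∈ S^d`. -/
def monom {S : Type*} [CommSemiring S] {d : ℕ} (z : Fin d → S) (a : Fin d → ℕ) : S :=
  ∏ i, z i ^ a i

/-- The iterated-sums signature coefficient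
`⟨ISS_{s,t}(z), w⟩ = ⊕_{s < j_1 < ⋯ < j_k ≤ t} z_{j_1}^{⊙w_1} ⊙ ⋯ ⊙ z_{j_k}^{⊙w_k}`.
For an eventually-zero time series `z` vanishing beyond time `N`, the value
`ISS z 0 N w` (for any word with nonzero letters) equals `⟨ISS_{0,∞}(z), w⟩`. -/
def ISS {S : Type*} [CommSemiring S] {d : ℕ} (z : ℕ → Fin d → S) :
    ℕ → ℕ → List (Fin d → ℕ) → S
  | _, _, [] => 1
  | s, t, a :: w => ∑ j ∈ Finset.Ioc s t, monom (z j) a * ISS z j t w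

open scoped Classical in
/-- The compression `ž` of an eventually-zero time series `z = (z_1, z_2, …)`
vanishing beyond time `N`: the list of entries `z_1, …, z_N` with all zero
entries deleted. -/
noncomputable def compress {S : Type*} [CommSemiring S] {d : ℕ}
    (z : ℕ → Fin d → S) (N : ℕ) : List (Fin d → S) :=
  ((List.range' 1 N).map z).filter (fun x => decide (x ≠ 0))

namespace CompressAux

variable {S : Type*} [CommSemiring S] {d : ℕ}

/-- Signature of a finite list: sum over strictly increasing subsequences. -/
def LISS : List (Fin d → S) → List (Fin d → ℕ) → S
  | _, [] => 1
  | [], _ :: _ => 0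
  | x :: l, a :: w => monom x a * LISS l w + LISS l (a :: w)

@[simp] lemma LISS_nil_word (l : List (Fin d → S)) : LISS l [] = 1 := by
  cases l <;> rfl

lemma monom_zero {a : Fin d → ℕ} (ha : a ≠ 0) : monom (0 : Fin d → S) a = 0 := by
  obtain ⟨i, hi⟩ := Function.ne_iff.mp ha
  exact Finset.prod_eq_zero (Finset.mem_univ i) (by simp [zero_pow hi])

lemma monom_single (x : Fin d → S) (i : Fin d) (k : ℕ) :
    monom x (Pi.single i k) = x i ^ k := by
  unfold monom
  rw [Finset.prod_eq_single i]
  · simp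
  · intro j _ hj
    simp [Pi.single_eq_of_ne hj]
  · simp

lemma ISS_cons (z : ℕ → Fin d → S) {s t : ℕ} (h : s < t) (a : Fin d → ℕ)
    (w : List (Fin d → ℕ)) :
    ISS z s t (a :: w)
      = monom (z (s+1)) a * ISS z (s+1) t w + ISS z (s+1) t (a :: w) := by
  show (∑ j ∈ Finset.Ioc s t, monom (z j) a * ISS z j t w) = _
  have hins : Finset.Ioc s t = insert (s+1) (Finset.Ioc (s+1) t) := by
    ext j; simp only [Finset.mem_Ioc, Finset.mem_insert]; omega
  rw [hins, Finset.sum_insert (by simp)]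
  rfl

lemma ISS_eq_LISS (z : ℕ → Fin d → S) :
    ∀ (n s : ℕ) (w : List (Fin d → ℕ)),
      ISS z s (s + n) w = LISS ((List.range' (s+1) n).map z) w := by
  intro n
  induction n with
  | zero =>
    intro s w
    cases w with
    | nil => rfl
    | cons a w =>
      show (∑ j ∈ Finset.Ioc s (s+0), monom (z j) a * ISS z j (s+0) w) = _
      simp [LISS]
  | succ n ih =>
    intro s w
    cases w with
    | nil => rfl
    | cons a w =>
      rw [ISS_cons z (by omega), List.range'_succ, List.map_cons]
      have e : s + (n+1) = (s+1) + n := by omega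
      rw [e, ih (s+1) w, ih (s+1) (a::w)]
      rfl

lemma LISS_eq_zero :
    ∀ (l : List (Fin d → S)) (w : List (Fin d → ℕ)),
      l.length < w.length → LISS l w = 0 := by
  intro l
  induction l with
  | nil =>
    intro w h
    cases w with
    | nil => simp at h
    | cons a w => rfl
  | cons x l ih =>
    intro w h
    cases w with
    | nil => simp at h
    | cons a w =>
      show monom x a * LISS l w + LISS l (a::w) = 0
      rw [ih w (by simp at h ⊢; omega), ih (a::w) (by simp at h ⊢; omega),
        mul_zero, add_zero]

lemma LISS_eq_prod :
    ∀ (l : List (Fin d → S)) (w : List (Fin d → ℕ)),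
      l.length = w.length → LISS l w = (List.zipWith monom l w).prod := by
  intro l
  induction l with
  | nil =>
    intro w h
    cases w with
    | nil => simp
    | cons a w => simp at h
  | cons x l ih =>
    intro w h
    cases w with
    | nil => simp at h
    | cons a w =>
      show monom x a * LISS l w + LISS l (a::w) = _
      rw [ih w (by simpa using h), LISS_eq_zero l (a::w) (by simp at h ⊢; omega),
        add_zero]
      simp

lemma LISS_filter (p : (Fin d → S) → Bool) (hp : ∀ x, p x = false → x = 0) :
    ∀ (l : List (Fin d → S)) (w : List (Fin d → ℕ)), (∀ a ∈ w, a ≠ 0) →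
      LISS (l.filter p) w = LISS l w := by
  intro l
  induction l with
  | nil => intro w _; rfl
  | cons x l ih =>
    intro w hw
    cases hpx : p x with
    | false =>
      rw [List.filter_cons_of_neg (by simp [hpx]), ih w hw]
      have hx0 : x = 0 := hp x hpx
      subst hx0
      cases w with
      | nil => simp
      | cons a w' =>
        show LISS l (a::w') = monom 0 a * LISS l w' + LISS l (a::w')
        rw [monom_zero (hw a (by simp)), zero_mul, zero_add]
    | true =>
      rw [List.filter_cons_of_pos (by simp [hpx])]
      cases w with
      | nil => simp
      | cons a w' =>
        show monom x a * LISS (l.filter p) w' + LISS (l.filter p) (a::w')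
            = monom x a * LISS l w' + LISS l (a::w')
        rw [ih w' (fun b hb => hw b (by simp [hb])), ih (a::w') hw]

open scoped Classical in
/-- A letter adapted to a nonzero vector `x`. -/
noncomputable def pick (x : Fin d → S) : Fin d → ℕ :=
  if h : ∃ i, x i ≠ 0 then Pi.single h.choose 1 else 1

lemma pick_ne_zero {x : Fin d → S} (hx : x ≠ 0) : pick x ≠ 0 := by
  have h' : ∃ i, x i ≠ 0 := by
    obtain ⟨i, hi⟩ := Function.ne_iff.mp hx
    exact ⟨i, by simpa using hi⟩
  rw [pick, dif_pos h']
  intro hc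
  have := congrFun hc h'.choose
  simp at this

lemma monom_pick {x : Fin d → S} (hx : x ≠ 0) : monom x (pick x) ≠ 0 := by
  have h' : ∃ i, x i ≠ 0 := by
    obtain ⟨i, hi⟩ := Function.ne_iff.mp hx
    exact ⟨i, by simpa using hi⟩
  rw [pick, dif_pos h', monom_single, pow_one]
  exact h'.choose_spec

lemma adapted_prod_ne (nzd : ∀ a b : S, a * b = 0 → a = 0 ∨ b = 0)
    (h1 : (1:S) ≠ 0) :
    ∀ (l : List (Fin d → S)), (∀ x ∈ l, x ≠ 0) →
      (List.zipWith monom l (l.map pick)).prod ≠ 0 := by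
  intro l
  induction l with
  | nil => intro _; simpa using h1
  | cons x l ih =>
    intro hl
    simp only [List.map_cons, List.zipWith_cons_cons, List.prod_cons]
    intro hc
    rcases nzd _ _ hc with h | h
    · exact monom_pick (hl x (by simp)) h
    · exact ih (fun y hy => hl y (by simp [hy])) h

lemma pick_word_ne_zero {l : List (Fin d → S)} (hl : ∀ x ∈ l, x ≠ 0) :
    ∀ a ∈ l.map pick, a ≠ (0 : Fin d → ℕ) := by
  intro a ha
  obtain ⟨y, hy, rfl⟩ := List.mem_map.mp ha
  exact pick_ne_zero (hl y hy)

lemma core2 (hcancel : ∀ a b c : S, a * c = b * c → c ≠ 0 → a = b)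
    (h1 : (1:S) ≠ 0) (nzd : ∀ a b : S, a * b = 0 → a = 0 ∨ b = 0) :
    ∀ (u v : List (Fin d → S)), (∀ x ∈ u, x ≠ 0) → (∀ x ∈ v, x ≠ 0) →
      u.length = v.length →
      (∀ w : List (Fin d → ℕ), (∀ a ∈ w, a ≠ 0) → w.length = u.length →
        (List.zipWith monom u w).prod = (List.zipWith monom v w).prod) →
      u = v := by
  intro u
  induction u with
  | nil =>
    intro v _ _ hlength _
    cases v with
    | nil => rfl
    | cons y v => simp at hlength
  | cons x u ih =>
    intro v hu hv hlength Hp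
    cases v with
    | nil => simp at hlength
    | cons y v =>
      have hu' : ∀ a ∈ u, a ≠ 0 := fun a ha => hu a (List.mem_cons_of_mem _ ha)
      have hv' : ∀ a ∈ v, a ≠ 0 := fun a ha => hv a (List.mem_cons_of_mem _ ha)
      have hx : x ≠ 0 := hu x (by simp)
      have hy : y ≠ 0 := hv y (by simp)
      have hlen' : u.length = v.length := by simpa using hlength
      have hCu : (List.zipWith monom u (u.map pick)).prod ≠ 0 :=
        adapted_prod_ne nzd h1 u hu'
      have key : ∀ a : Fin d → ℕ, a ≠ 0 →
          monom x a * (List.zipWith monom u (u.map pick)).prod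
            = monom y a * (List.zipWith monom v (u.map pick)).prod := by
        intro a ha
        have := Hp (a :: u.map pick)
          (by
            intro b hb
            rcases List.mem_cons.mp hb with rfl | hb
            · exact ha
            · exact pick_word_ne_zero hu' b hb)
          (by simp)
        simpa using this
      have hCv : (List.zipWith monom v (u.map pick)).prod ≠ 0 := by
        intro hc
        have k := key (pick x) (pick_ne_zero hx)
        rw [hc, mul_zero] at k
        rcases nzd _ _ k with h | h
        · exact monom_pick hx h
        · exact hCu h
      have hxy : x = y := by
        funext i
        have k1 := key (Pi.single i 1)
          (by intro hc; have := congrFun hc i; simp at this)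
        have k2 := key (Pi.single i 2)
          (by intro hc; have := congrFun hc i; simp at this)
        rw [monom_single, monom_single, pow_one, pow_one] at k1
        rw [monom_single, monom_single] at k2
        by_cases hyi : y i = 0
        · rw [hyi, zero_mul] at k1
          rw [hyi]
          rcases nzd _ _ k1 with h | h
          · exact h
          · exact absurd h hCu
        · have e3 : x i * (y i * (List.zipWith monom v (u.map pick)).prod)
              = y i * (y i * (List.zipWith monom v (u.map pick)).prod) := by
            calc x i * (y i * (List.zipWith monom v (u.map pick)).prod)
                = x i * (x i * (List.zipWith monom u (u.map pick)).prod) := by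
                  rw [k1]
              _ = x i ^ 2 * (List.zipWith monom u (u.map pick)).prod := by ring
              _ = y i ^ 2 * (List.zipWith monom v (u.map pick)).prod := k2
              _ = y i * (y i * (List.zipWith monom v (u.map pick)).prod) := by
                  ring
          have hyCv : y i * (List.zipWith monom v (u.map pick)).prod ≠ 0 := by
            intro hc
            rcases nzd _ _ hc with h | h
            · exact hyi h
            · exact hCv h
          exact hcancel _ _ _ e3 hyCv
      subst hxy
      congr 1
      apply ih v hu' hv' hlen'
      intro w hw hwl
      have h5 := Hp (pick x :: w)
        (by
          intro b hb
          rcases List.mem_cons.mp hb with rfl | hb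
          · exact pick_ne_zero hx
          · exact hw b hb)
        (by simpa using hwl)
      simp only [List.zipWith_cons_cons, List.prod_cons] at h5
      have h6 : (List.zipWith monom u w).prod * monom x (pick x)
          = (List.zipWith monom v w).prod * monom x (pick x) := by
        rw [mul_comm, mul_comm ((List.zipWith monom v w).prod)]
        exact h5
      exact hcancel _ _ _ h6 (monom_pick hx)

lemma core (hcancel : ∀ a b c : S, a * c = b * c → c ≠ 0 → a = b)
    (h1 : (1:S) ≠ 0) :
    ∀ (u v : List (Fin d → S)), (∀ x ∈ u, x ≠ 0) → (∀ x ∈ v, x ≠ 0) →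
      (∀ w : List (Fin d → ℕ), (∀ a ∈ w, a ≠ 0) → LISS u w = LISS v w) →
      u = v := by
  have nzd : ∀ a b : S, a * b = 0 → a = 0 ∨ b = 0 := by
    intro a b h
    by_cases hb : b = 0
    · exact Or.inr hb
    · exact Or.inl (hcancel a 0 b (by rw [h, zero_mul]) hb)
  have hlen : ∀ (u v : List (Fin d → S)), (∀ x ∈ v, x ≠ 0) →
      (∀ w : List (Fin d → ℕ), (∀ a ∈ w, a ≠ 0) → LISS u w = LISS v w) →
      v.length ≤ u.length := by
    intro u v hv H
    by_contra hlt
    push_neg at hlt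
    have h0 : LISS u (v.map pick) = 0 := LISS_eq_zero u _ (by simpa using hlt)
    have h2 : LISS v (v.map pick) ≠ 0 := by
      rw [LISS_eq_prod v _ (by simp)]
      exact adapted_prod_ne nzd h1 v hv
    exact h2 (by rw [← H _ (pick_word_ne_zero hv), h0])
  intro u v hu hv H
  have hlen1 := hlen u v hv H
  have hlen2 := hlen v u hu (fun w hw => (H w hw).symm)
  have hlength : u.length = v.length := le_antisymm hlen2 hlen1
  apply core2 hcancel h1 nzd u v hu hv hlength
  intro w hw hwl
  rw [← LISS_eq_prod u w hwl.symm, ← LISS_eq_prod v w (by omega), H w hw]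

open scoped Classical in
lemma compress_mem_ne_zero {z : ℕ → Fin d → S} {N : ℕ} {x : Fin d → S}
    (hx : x ∈ compress z N) : x ≠ 0 := by
  unfold compress at hx
  have := (List.mem_filter.mp hx).2
  exact of_decide_eq_true this

open scoped Classical in
lemma LISS_compress (z : ℕ → Fin d → S) (N : ℕ) (w : List (Fin d → ℕ))
    (hw : ∀ a ∈ w, a ≠ 0) :
    LISS (compress z N) w = ISS z 0 N w := by
  unfold compress
  rw [LISS_filter _ (fun x h => not_not.mp (of_decide_eq_false h)) _ w hw]
  have := ISS_eq_LISS z N 0 w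
  rw [zero_add] at this
  exact this.symm

end CompressAux

/-- **Reconstruction up to compression under the cancellation property.** Let `S` be
a commutative semiring with the cancellation property (`a ⊙ c = b ⊙ c` and `c ≠ 0`
imply `a = b`). If the eventually-zero time series `z` (vanishing beyond `N`) and
`z'` (vanishing beyond `N'`) have the same iterated-sums signature
`⟨ISS_{0,∞}(z), w⟩ = ⟨ISS_{0,∞}(z'), w⟩` for every word `w` over the alphabet of
nonzero exponent vectors, then their compressions coincide: `ž = ž'`. -/
theorem compress_eq_of_iss_eq {S : Type*} [CommSemiring S] {d : ℕ}
    (hcancel : ∀ a b c : S, a * c = b * c → c ≠ 0 → a = b)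
    (z z' : ℕ → Fin d → S) (N N' : ℕ)
    (hz : ∀ i, N < i → z i = 0) (hz' : ∀ i, N' < i → z' i = 0)
    (hsig : ∀ w : List (Fin d → ℕ), (∀ a ∈ w, a ≠ 0) →
      ISS z 0 N w = ISS z' 0 N' w) :
    compress z N = compress z' N' := by
  classical
  by_cases h1 : (1:S) = 0
  · have hall : ∀ x : Fin d → S, x = 0 := by
      intro x
      funext i
      calc x i = x i * 1 := (mul_one _).symm
        _ = x i * 0 := by rw [h1]
        _ = 0 := mul_zero _
    have hemp : ∀ (w : ℕ → Fin d → S) (M : ℕ), compress w M = [] := by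
      intro w M
      unfold compress
      apply List.filter_eq_nil_iff.mpr
      intro x _
      simp [hall x]
    rw [hemp, hemp]
  · apply CompressAux.core hcancel h1
    · exact fun x hx => CompressAux.compress_mem_ne_zero hx
    · exact fun x hx => CompressAux.compress_mem_ne_zero hx
    · intro w hw
      rw [CompressAux.LISS_compress z N w hw, CompressAux.LISS_compress z' N' w hw]
      exact hsig w hw
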